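/- Let δ > 0 and define V(y_1, y_2) = (1/y_1) Φ( log(y_2/y_1)/√(2δ) + √(δ/2) ) + (1/y_2) Φ( log(y_1/y_2)/√(2δ) + √(δ/2) ) for y_1, y_2 > 0, where Φ is the standard normal distribution function. Then the tail dependence coefficient of the bivariate distribution G(y_1,y_2) = exp(-V(y_1,y_2)) equals 2(1 - Φ(√(δ/2))): precisely, lim_{y → ∞} ( 1 - 2 e^{-1/y} + e^{-V(y,y)} ) / ( 1 - e^{-1/y} ) = 2 ( 1 - Φ( √(δ/2) ) ). (The left-hand ratio equals P(X > y, Y > y)/P(Y > y) for a random pair (X,Y) with joint distribution function G and standard Fréchet margins.) -/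

import Mathlib

/-- The standard normal distribution function `Φ(x) = ∫_{-∞}^x (2π)^{-1/2} e^{-t²/2} dt`. -/
noncomputable def stdNormalCDF (x : ℝ) : ℝ :=
  ∫ t in Set.Iic x, (Real.sqrt (2 * Real.pi))⁻¹ * Real.exp (-t ^ 2 / 2)

/-- The bivariate Hüsler–Reiss exponent measure with dependence parameter `δ`:
`V(y₁,y₂) = (1/y₁) Φ(log(y₂/y₁)/√(2δ) + √(δ/2)) + (1/y₂) Φ(log(y₁/y₂)/√(2δ) + √(δ/2))`. -/
noncomputable def huslerReissV (δ y₁ y₂ : ℝ) : ℝ :=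
  (1 / y₁) * stdNormalCDF (Real.log (y₂ / y₁) / Real.sqrt (2 * δ) + Real.sqrt (δ / 2))
    + (1 / y₂) * stdNormalCDF (Real.log (y₁ / y₂) / Real.sqrt (2 * δ) + Real.sqrt (δ / 2))

/-- For `δ > 0`, the tail dependence coefficient of the bivariate
distribution `G(y₁,y₂) = exp(-V(y₁,y₂))` equals `2(1 - Φ(√(δ/2)))`:
`lim_{y → ∞} (1 - 2 e^{-1/y} + e^{-V(y,y)}) / (1 - e^{-1/y}) = 2(1 - Φ(√(δ/2)))`.
(The ratio is `P(X > y, Y > y)/P(Y > y)` for `(X,Y) ~ G` with standard Fréchet margins.) -/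
theorem huslerReiss_tail_dependence (δ : ℝ) (hδ : 0 < δ) :
    Filter.Tendsto
      (fun y : ℝ =>
        (1 - 2 * Real.exp (-(1 / y)) + Real.exp (-huslerReissV δ y y)) /
          (1 - Real.exp (-(1 / y))))
      Filter.atTop (nhds (2 * (1 - stdNormalCDF (Real.sqrt (δ / 2))))) := by
  set a : ℝ := stdNormalCDF (Real.sqrt (δ / 2)) with ha
  set c : ℝ := 2 * a with hc
  -- the two one-variable functions
  set N : ℝ → ℝ := fun t => 1 - 2 * Real.exp (-t) + Real.exp (-(c * t)) with hNdef
  set D : ℝ → ℝ := fun t => 1 - Real.exp (-t) with hDdef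
  -- derivatives at 0
  have h2 : HasDerivAt (fun t : ℝ => Real.exp (-t)) (Real.exp (-(0:ℝ)) * (-1)) 0 :=
    (hasDerivAt_id (0:ℝ)).neg.exp
  have h3 : HasDerivAt (fun t : ℝ => Real.exp (-(c * t))) (Real.exp (-(c * 0)) * (-c)) 0 :=
by
    simpa using ((hasDerivAt_id (0:ℝ)).const_mul c).neg.exp
  have hN : HasDerivAt N (2 - c) 0 := by
    have := ((h2.const_mul 2).const_sub 1).add h3
    refine this.congr_deriv ?_
    simp; ring
  have hD : HasDerivAt D 1 0 := by
    have := h2.const_sub 1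
    refine this.congr_deriv ?_
    simp
  have hNs : Filter.Tendsto (fun t => N t / t) (nhdsWithin 0 {(0:ℝ)}ᶜ) (nhds (2 - c)) := by
    have := hasDerivAt_iff_tendsto_slope.mp hN
    refine this.congr (fun t => ?_)
    simp [slope, N]; ring
  have hDs : Filter.Tendsto (fun t => D t / t) (nhdsWithin 0 {(0:ℝ)}ᶜ) (nhds 1) := by
    have := hasDerivAt_iff_tendsto_slope.mp hD
    refine this.congr (fun t => ?_)
    simp [slope, D]; ring
  have hratio : Filter.Tendsto (fun t => N t / D t) (nhdsWithin 0 {(0:ℝ)}ᶜ) (nhds (2 - c)) := by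
    have h := hNs.div hDs one_ne_zero
    rw [div_one] at h
    refine h.congr' ?_
    filter_upwards [self_mem_nhdsWithin] with t ht
    have ht' : t ≠ 0 := ht
    show N t / t / (D t / t) = N t / D t
    field_simp
  -- 1/y → 0 within {0}ᶜ
  have hinv : Filter.Tendsto (fun y : ℝ => 1 / y) Filter.atTop (nhdsWithin 0 {(0:ℝ)}ᶜ) := by
    rw [tendsto_nhdsWithin_iff]
    constructor
    · simpa using tendsto_inv_atTop_zero
    · filter_upwards [Filter.eventually_gt_atTop 0] with y hy
      exact ne_of_gt (by positivity)
  have hcomp := hratio.comp hinv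
  have hfinal : Filter.Tendsto
      (fun y : ℝ =>
        (1 - 2 * Real.exp (-(1 / y)) + Real.exp (-huslerReissV δ y y)) /
          (1 - Real.exp (-(1 / y))))
      Filter.atTop (nhds (2 - c)) := by
    refine hcomp.congr' ?_
    filter_upwards [Filter.eventually_gt_atTop 0] with y hy
    have hV : huslerReissV δ y y = c * (1 / y) := by
      rw [huslerReissV, div_self (ne_of_gt hy), Real.log_one, zero_div, zero_add]
      ring
    simp only [Function.comp, N, D, hV]
  have : (2:ℝ) - c = 2 * (1 - a) := by ring
  rwa [this] at hfinal
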